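/- Fix constants a > 0, b > 0, and c > 1. Define f(x) = x · √( (2^{1/x}·(1 + a·2^{1/x})) / (1 − b·2^{c/x}) ) on D = { x > 0 : 1 − b·2^{c/x} > 0 }. Then f is convex on D. -/

import Mathlib

open Real Set

/-- derivative of `u ↦ log (1 + k * exp (s*u))`. -/
private lemma hasDerivAt_A (k s u : ℝ) (hk : 0 < k) :
    HasDerivAt (fun u => Real.log (1 + k * Real.exp (s * u)))
      (s * (1 - (1 + k * Real.exp (s * u))⁻¹)) u := by
  have h1 : HasDerivAt (fun u : ℝ => s * u) s u := by
    simpa using (hasDerivAt_id u).const_mul s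
  have h3 : HasDerivAt (fun u => 1 + k * Real.exp (s * u))
      (k * (Real.exp (s * u) * s)) u := (h1.exp.const_mul k).const_add 1
  have hpos : (0:ℝ) < 1 + k * Real.exp (s * u) := by positivity
  have h4 := h3.log (ne_of_gt hpos)
  convert h4 using 1
  field_simp
  ring

private lemma convexA (k s : ℝ) (hk : 0 < k) (hs : 0 < s) :
    ConvexOn ℝ Set.univ (fun u => Real.log (1 + k * Real.exp (s * u))) := by
  have hd : ∀ u : ℝ, HasDerivAt (fun u => Real.log (1 + k * Real.exp (s * u)))
      (s * (1 - (1 + k * Real.exp (s * u))⁻¹)) u := fun u => hasDerivAt_A k s u hk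
  have hdiff : Differentiable ℝ (fun u => Real.log (1 + k * Real.exp (s * u))) :=
    fun u => (hd u).differentiableAt
  refine MonotoneOn.convexOn_of_deriv convex_univ hdiff.continuous.continuousOn
    hdiff.differentiableOn ?_
  have hde : deriv (fun u => Real.log (1 + k * Real.exp (s * u)))
      = fun u => s * (1 - (1 + k * Real.exp (s * u))⁻¹) := funext fun u => (hd u).deriv
  rw [hde]
  intro u _ v _ huv
  have h1 : (0:ℝ) < 1 + k * Real.exp (s * u) := by positivity
  have h2 : 1 + k * Real.exp (s * u) ≤ 1 + k * Real.exp (s * v) := by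
    have := Real.exp_le_exp.2 (mul_le_mul_of_nonneg_left huv hs.le)
    nlinarith
  have h3 : (1 + k * Real.exp (s * v))⁻¹ ≤ (1 + k * Real.exp (s * u))⁻¹ := by
    gcongr
  have h4 : 1 - (1 + k * Real.exp (s * u))⁻¹ ≤ 1 - (1 + k * Real.exp (s * v))⁻¹ := by
    linarith
  exact mul_le_mul_of_nonneg_left h4 hs.le

private lemma hasDerivAt_B (k s u : ℝ) (h : k * Real.exp (s * u) < 1) :
    HasDerivAt (fun u => -Real.log (1 - k * Real.exp (s * u)))
      (s * ((1 - k * Real.exp (s * u))⁻¹ - 1)) u := by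
  have h1 : HasDerivAt (fun u : ℝ => s * u) s u := by
    simpa using (hasDerivAt_id u).const_mul s
  have h3 : HasDerivAt (fun u => 1 - k * Real.exp (s * u))
      (-(k * (Real.exp (s * u) * s))) u := (h1.exp.const_mul k).const_sub 1
  have hpos : (0:ℝ) < 1 - k * Real.exp (s * u) := by linarith
  have h4 := (h3.log (ne_of_gt hpos)).neg
  refine h4.congr_deriv ?_
  field_simp
  ring

private lemma convexB (k s T : ℝ) (hk : 0 < k) (hs : 0 < s)
    (hT : ∀ u ∈ Set.Iio T, k * Real.exp (s * u) < 1) :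
    ConvexOn ℝ (Set.Iio T) (fun u => -Real.log (1 - k * Real.exp (s * u))) := by
  have hd : ∀ u ∈ Set.Iio T, HasDerivAt (fun u => -Real.log (1 - k * Real.exp (s * u)))
      (s * ((1 - k * Real.exp (s * u))⁻¹ - 1)) u := fun u hu => hasDerivAt_B k s u (hT u hu)
  refine MonotoneOn.convexOn_of_deriv (convex_Iio T) ?_ ?_ ?_
  · exact fun u hu => ((hd u hu).differentiableAt.continuousAt).continuousWithinAt
  · rw [interior_Iio]
    exact fun u hu => ((hd u hu).differentiableAt).differentiableWithinAt
  · rw [interior_Iio]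
    intro u hu v hv huv
    rw [(hd u hu).deriv, (hd v hv).deriv]
    have h1 : (0:ℝ) < 1 - k * Real.exp (s * v) := by have := hT v hv; linarith
    have h2 : 1 - k * Real.exp (s * v) ≤ 1 - k * Real.exp (s * u) := by
      have h0 : Real.exp (s * u) ≤ Real.exp (s * v) :=
        Real.exp_le_exp.2 (mul_le_mul_of_nonneg_left huv hs.le)
      nlinarith
    have h3 : (1 - k * Real.exp (s * u))⁻¹ ≤ (1 - k * Real.exp (s * v))⁻¹ := by
      gcongr
    have h5 : (1 - k * Real.exp (s * u))⁻¹ - 1 ≤ (1 - k * Real.exp (s * v))⁻¹ - 1 := by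
      linarith
    exact mul_le_mul_of_nonneg_left h5 hs.le

private lemma convexOn_exp_comp {S : Set ℝ} {f : ℝ → ℝ} (hf : ConvexOn ℝ S f) :
    ConvexOn ℝ S (fun x => Real.exp (f x)) := by
  refine ⟨hf.1, fun x hx y hy p q hp hq hpq => ?_⟩
  calc Real.exp (f (p • x + q • y)) ≤ Real.exp (p • f x + q • f y) :=
        Real.exp_le_exp.2 (hf.2 hx hy hp hq hpq)
    _ ≤ p • Real.exp (f x) + q • Real.exp (f y) :=
        convexOn_exp.2 (Set.mem_univ _) (Set.mem_univ _) hp hq hpq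

theorem stmt_5 (a b c : ℝ) (ha : 0 < a) (hb : 0 < b) (hc : 1 < c) :
    ConvexOn ℝ {x : ℝ | 0 < x ∧ 0 < 1 - b * (2 : ℝ) ^ (c / x)}
      (fun x : ℝ =>
        x * Real.sqrt (((2 : ℝ) ^ (1 / x) * (1 + a * (2 : ℝ) ^ (1 / x))) /
          (1 - b * (2 : ℝ) ^ (c / x)))) := by
  set s : ℝ := Real.log 2 with hs_def
  have hs : 0 < s := Real.log_pos one_lt_two
  have hcs : 0 < c * s := by positivity
  set T : ℝ := -Real.log b / (c * s) with hT_def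
  -- basic rpow rewrites
  have h2a : ∀ y : ℝ, (2:ℝ) ^ (1 / y) = Real.exp (s * (1 / y)) := by
    intro y
    rw [Real.rpow_def_of_pos (by norm_num : (0:ℝ) < 2)]
  have h2c : ∀ y : ℝ, (2:ℝ) ^ (c / y) = Real.exp ((c * s) * (1 / y)) := by
    intro y
    rw [Real.rpow_def_of_pos (by norm_num : (0:ℝ) < 2)]
    congr 1
    rw [hs_def]
    ring
  -- the key iff
  have hiff : ∀ u : ℝ, b * Real.exp ((c * s) * u) < 1 ↔ u < T := by
    intro u
    have hb' : b * Real.exp ((c * s) * u) = Real.exp (Real.log b + (c * s) * u) := by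
      rw [Real.exp_add, Real.exp_log hb]
    rw [hb', show (1:ℝ) = Real.exp 0 by rw [Real.exp_zero], Real.exp_lt_exp, hT_def,
      lt_div_iff₀ hcs]
    constructor <;> intro h <;> nlinarith
  have hmem : ∀ x : ℝ, (0 < 1 - b * (2:ℝ) ^ (c / x)) ↔ 1 / x < T := by
    intro x
    rw [h2c x]
    constructor
    · intro h; exact (hiff (1/x)).1 (by linarith)
    · intro h; have := (hiff (1/x)).2 h; linarith
  -- the log function ℓ and exponential E
  set ℓ : ℝ → ℝ := fun u => s * u + Real.log (1 + a * Real.exp (s * u)) +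
      -Real.log (1 - b * Real.exp ((c * s) * u)) with hℓ_def
  set E : ℝ → ℝ := fun u => Real.exp ((1/2 : ℝ) * ℓ u) with hE_def
  have hℓconv : ConvexOn ℝ (Set.Iio T) ℓ := by
    have c1 : ConvexOn ℝ (Set.Iio T) (fun u => s * u) := by
      refine ⟨convex_Iio T, fun x _ y _ p q hp hq hpq => ?_⟩
      simp only [smul_eq_mul]
      apply le_of_eq
      ring
    have c2 := (convexA a s ha hs).subset (Set.subset_univ _) (convex_Iio T)
    have c3 := convexB b (c*s) T hb hcs (fun u hu => (hiff u).2 hu)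
    exact (c1.add c2).add c3
  have hEconv : ConvexOn ℝ (Set.Iio T) E := by
    have h := convexOn_exp_comp (hℓconv.smul (by norm_num : (0:ℝ) ≤ 1/2))
    simpa [hE_def, smul_eq_mul] using h
  -- pointwise identification of the target with `E (1/w)`
  have key : ∀ w : ℝ, w ∈ {x : ℝ | 0 < x ∧ 0 < 1 - b * (2:ℝ) ^ (c / x)} →
      Real.sqrt (((2:ℝ) ^ (1 / w) * (1 + a * (2:ℝ) ^ (1 / w))) /
        (1 - b * (2:ℝ) ^ (c / w))) = E (1 / w) := by
    intro w hw
    obtain ⟨hw0, hw1⟩ := hw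
    have hden : 0 < 1 - b * Real.exp ((c*s) * (1/w)) := by
      rw [h2c w] at hw1; exact hw1
    rw [h2a w, h2c w]
    have hnum : 0 < Real.exp (s * (1/w)) * (1 + a * Real.exp (s * (1/w))) := by positivity
    have hY : 0 < Real.exp (s * (1/w)) * (1 + a * Real.exp (s * (1/w))) /
        (1 - b * Real.exp ((c*s) * (1/w))) := div_pos hnum hden
    rw [Real.sqrt_eq_rpow, Real.rpow_def_of_pos hY]
    simp only [hE_def, hℓ_def]
    rw [Real.exp_eq_exp]
    rw [Real.log_div (ne_of_gt hnum) (ne_of_gt hden),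
      Real.log_mul (ne_of_gt (Real.exp_pos _)) (by positivity), Real.log_exp]
    ring
  -- convexity of the domain
  have hDconv : Convex ℝ {x : ℝ | 0 < x ∧ 0 < 1 - b * (2:ℝ) ^ (c / x)} := by
    intro x hx y hy p q hp hq hpq
    obtain ⟨hx0, hx1⟩ := hx
    obtain ⟨hy0, hy1⟩ := hy
    have hmin : 0 < min x y := lt_min hx0 hy0
    have hz1 : min x y ≤ p • x + q • y := by
      simp only [smul_eq_mul]
      nlinarith [min_le_left x y, min_le_right x y]
    have hz0 : 0 < p • x + q • y := lt_of_lt_of_le hmin hz1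
    refine ⟨hz0, ?_⟩
    rw [hmem]
    have h1z : 1 / (p • x + q • y) ≤ 1 / min x y := one_div_le_one_div_of_le hmin hz1
    have hminT : 1 / min x y < T := by
      rcases le_total x y with h | h
      · rw [min_eq_left h]; exact (hmem x).1 hx1
      · rw [min_eq_right h]; exact (hmem y).1 hy1
    linarith
  refine ⟨hDconv, ?_⟩
  intro x hx y hy p q hp hq hpq
  have hzD : p • x + q • y ∈ {x : ℝ | 0 < x ∧ 0 < 1 - b * (2:ℝ) ^ (c / x)} :=
    hDconv hx hy hp hq hpq
  obtain ⟨hx0, hx1⟩ := hx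
  obtain ⟨hy0, hy1⟩ := hy
  simp only [smul_eq_mul] at hzD ⊢
  have hz0 : 0 < p * x + q * y := hzD.1
  rw [key x ⟨hx0, hx1⟩, key y ⟨hy0, hy1⟩, key _ hzD]
  set z : ℝ := p * x + q * y with hz_def
  have hzne : z ≠ 0 := ne_of_gt hz0
  have hxne : x ≠ 0 := ne_of_gt hx0
  have hyne : y ≠ 0 := ne_of_gt hy0
  have hp' : 0 ≤ p * x / z := by positivity
  have hq' : 0 ≤ q * y / z := by positivity
  have hsum : p * x / z + q * y / z = 1 := by
    rw [← add_div, hz_def, div_self hzne]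
  have e1 : p * x / z * (1 / x) = p / z := by
    field_simp
  have e2 : q * y / z * (1 / y) = q / z := by
    field_simp
  have hcombo : (p * x / z) • (1 / x) + (q * y / z) • (1 / y) = 1 / z := by
    simp only [smul_eq_mul]
    rw [e1, e2, ← add_div, hpq]
  have hmemx : 1 / x ∈ Set.Iio T := (hmem x).1 hx1
  have hmemy : 1 / y ∈ Set.Iio T := (hmem y).1 hy1
  have hE := hEconv.2 hmemx hmemy hp' hq' hsum
  rw [hcombo] at hE
  simp only [smul_eq_mul] at hE
  calc z * E (1 / z) ≤ z * (p * x / z * E (1 / x) + q * y / z * E (1 / y)) :=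
        mul_le_mul_of_nonneg_left hE hz0.le
    _ = p * (x * E (1 / x)) + q * (y * E (1 / y)) := by
        field_simp
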